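/- The matrices R₁ = [[5,4,-2],[-6,-5,2],[0,0,-1]], R₂ = [[3,2,-2],[-2,-1,2],[2,2,-1]], R₃ = [[1,0,0],[0,0,1],[0,1,0]], and R₄ = [[1,0,0],[0,1,-1],[0,1,0]] are isometries of the Gram matrix G = [[6,0,0],[0,-4,2],[0,2,-4]]; moreover R₁, R₂, R₃ have order 2 and R₄ has order 6. -/
import Mathlib


open Matrix

def Gnonsyz : Matrix (Fin 3) (Fin 3) ℤ := !![6, 0, 0; 0, -4, 2; 0, 2, -4]
def R₁ : Matrix (Fin 3) (Fin 3) ℤ := !![5, 4, -2; -6, -5, 2; 0, 0, -1]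
def R₂ : Matrix (Fin 3) (Fin 3) ℤ := !![3, 2, -2; -2, -1, 2; 2, 2, -1]
def R₃ : Matrix (Fin 3) (Fin 3) ℤ := !![1, 0, 0; 0, 0, 1; 0, 1, 0]
def R₄ : Matrix (Fin 3) (Fin 3) ℤ := !![1, 0, 0; 0, 1, -1; 0, 1, 0]

set_option maxHeartbeats 2000000 in
/-- `R₁, R₂, R₃, R₄` are isometries of the Gram matrix `[[6,0,0],[0,-4,2],[0,2,-4]]`;
`R₁, R₂, R₃` have order 2 and `R₄` has order 6. -/
theorem nonsyzygetic_generators_are_isometries :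
    (R₁ᵀ * Gnonsyz * R₁ = Gnonsyz ∧ R₂ᵀ * Gnonsyz * R₂ = Gnonsyz ∧
      R₃ᵀ * Gnonsyz * R₃ = Gnonsyz ∧ R₄ᵀ * Gnonsyz * R₄ = Gnonsyz) ∧
    orderOf R₁ = 2 ∧ orderOf R₂ = 2 ∧ orderOf R₃ = 2 ∧ orderOf R₄ = 6 := by
  refine ⟨⟨?_, ?_, ?_, ?_⟩, ?_, ?_, ?_, ?_⟩
  · ext i j; fin_cases i <;> fin_cases j <;>
      simp [R₁, Gnonsyz, Matrix.mul_apply, Fin.sum_univ_succ, Matrix.vecHead, Matrix.vecTail]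
  · ext i j; fin_cases i <;> fin_cases j <;>
      simp [R₂, Gnonsyz, Matrix.mul_apply, Fin.sum_univ_succ, Matrix.vecHead, Matrix.vecTail]
  · ext i j; fin_cases i <;> fin_cases j <;>
      simp [R₃, Gnonsyz, Matrix.mul_apply, Fin.sum_univ_succ, Matrix.vecHead, Matrix.vecTail]
  · ext i j; fin_cases i <;> fin_cases j <;>
      simp [R₄, Gnonsyz, Matrix.mul_apply, Fin.sum_univ_succ, Matrix.vecHead, Matrix.vecTail]
  · apply orderOf_eq_prime
    · ext i j; fin_cases i <;> fin_cases j <;>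
        simp [R₁, pow_two, Matrix.mul_apply, Fin.sum_univ_succ, Matrix.one_apply,
          Matrix.vecHead, Matrix.vecTail]
    · intro h
      have := congrFun (congrFun h 0) 1
      simp [R₁, Matrix.one_apply] at this
  · apply orderOf_eq_prime
    · ext i j; fin_cases i <;> fin_cases j <;>
        simp [R₂, pow_two, Matrix.mul_apply, Fin.sum_univ_succ, Matrix.one_apply,
          Matrix.vecHead, Matrix.vecTail]
    · intro h
      have := congrFun (congrFun h 0) 1
      simp [R₂, Matrix.one_apply] at this
  · apply orderOf_eq_prime
    · ext i j; fin_cases i <;> fin_cases j <;>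
        simp [R₃, pow_two, Matrix.mul_apply, Fin.sum_univ_succ, Matrix.one_apply,
          Matrix.vecHead, Matrix.vecTail]
    · intro h
      have := congrFun (congrFun h 1) 2
      simp [R₃, Matrix.one_apply] at this
  · rw [orderOf_eq_iff (by norm_num)]
    constructor
    · ext i j; fin_cases i <;> fin_cases j <;>
        simp [R₄, pow_succ, Matrix.mul_apply, Fin.sum_univ_succ, Matrix.one_apply,
          Matrix.vecHead, Matrix.vecTail]
    · intro m hm hm' h
      interval_cases m <;>
        · have h1 := congrFun (congrFun h 1) 1
          have h2 := congrFun (congrFun h 1) 2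
          simp [R₄, pow_succ, Matrix.mul_apply, Fin.sum_univ_succ, Matrix.one_apply,
            Matrix.vecHead, Matrix.vecTail] at h1 h2
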